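/- For integers a and b, the graded rings Z[x,y]/(x^2, y(y+ax)) and Z[x,y]/(x^2, y(y+bx)) (with x,y in degree 2) are isomorphic as graded rings if and only if a ≡ b (mod 2). -/

import Mathlib

open MvPolynomial

/-- The integral cohomology ring of the Hirzebruch surface `P(ℂ ⊕ γ^a)`:
`ℤ[x,y]/(x², y(y + a·x))`, where `x = X 0` and `y = X 1` sit in degree 2. -/
noncomputable def hirzebruchRing (a : ℤ) : Type :=
  MvPolynomial (Fin 2) ℤ ⧸
    (Ideal.span {(X 0 : MvPolynomial (Fin 2) ℤ) ^ 2, X 1 * (X 1 + C a * X 0)})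

noncomputable instance (a : ℤ) : CommRing (hirzebruchRing a) :=
  inferInstanceAs (CommRing (MvPolynomial (Fin 2) ℤ ⧸
    (Ideal.span {(X 0 : MvPolynomial (Fin 2) ℤ) ^ 2, X 1 * (X 1 + C a * X 0)})))

/-- The degree-2 part of the Hirzebruch ring: the ℤ-span of the classes of `x` and `y`.
Since the generators sit in degree 2 and the relations are homogeneous, a ring isomorphism
is graded iff it identifies these degree-2 parts. -/
noncomputable def hirzebruchDeg2 (a : ℤ) : Submodule ℤ (hirzebruchRing a) :=
  Submodule.span ℤ
    {Ideal.Quotient.mk _ (X 0 : MvPolynomial (Fin 2) ℤ),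
     Ideal.Quotient.mk _ (X 1 : MvPolynomial (Fin 2) ℤ)}

namespace Hirz

noncomputable def I (a : ℤ) : Ideal (MvPolynomial (Fin 2) ℤ) :=
  Ideal.span {(X 0 : MvPolynomial (Fin 2) ℤ) ^ 2, X 1 * (X 1 + C a * X 0)}

noncomputable def mk (a : ℤ) : MvPolynomial (Fin 2) ℤ →+* hirzebruchRing a :=
  Ideal.Quotient.mk (I a)

noncomputable def x (a : ℤ) : hirzebruchRing a := mk a (X 0)
noncomputable def y (a : ℤ) : hirzebruchRing a := mk a (X 1)

lemma hx (a : ℤ) : x a * x a = 0 := by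
  rw [x, ← map_mul, ← pow_two]
  exact Ideal.Quotient.eq_zero_iff_mem.2 (Ideal.subset_span (Set.mem_insert _ _))

lemma hrel (a : ℤ) : y a * (y a + (a : hirzebruchRing a) * x a) = 0 := by
  have : (a : hirzebruchRing a) = mk a (C a) := by
    rw [show (C a : MvPolynomial (Fin 2) ℤ) = (a : MvPolynomial (Fin 2) ℤ) from eq_intCast C a]
    exact (map_intCast (mk a) a).symm
  rw [this, x, y, ← map_mul, ← map_add, ← map_mul]
  exact Ideal.Quotient.eq_zero_iff_mem.2
    (Ideal.subset_span (Set.mem_insert_of_mem _ rfl))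

lemma deg2_eq (a : ℤ) : hirzebruchDeg2 a = Submodule.span ℤ {x a, y a} := rfl

lemma mem_deg2 (a : ℤ) {z : hirzebruchRing a} (hz : z ∈ hirzebruchDeg2 a) :
    ∃ u v : ℤ, (u : hirzebruchRing a) * x a + (v : hirzebruchRing a) * y a = z := by
  rw [deg2_eq, Submodule.mem_span_pair] at hz
  obtain ⟨u, v, huv⟩ := hz
  exact ⟨u, v, by rw [← huv, zsmul_eq_mul, zsmul_eq_mul]⟩

lemma x_mem_deg2 (a : ℤ) : x a ∈ hirzebruchDeg2 a :=
  Submodule.subset_span (Set.mem_insert _ _)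

lemma y_mem_deg2 (a : ℤ) : y a ∈ hirzebruchDeg2 a :=
  Submodule.subset_span (Set.mem_insert_of_mem _ rfl)

lemma mk_surj (a : ℤ) : Function.Surjective (mk a) :=
  Ideal.Quotient.mk_surjective

/-- The key coefficient functional vanishes mod 2 on the ideal when `a` is odd. -/
lemma coeff_ideal (a : ℤ) {p : MvPolynomial (Fin 2) ℤ} (hp : p ∈ I a) :
    ∃ d0 : ℤ, coeff (Finsupp.single 1 1 + Finsupp.single 0 1) p
      + coeff (Finsupp.single 1 2) p = (a + 1) * d0 := by
  rw [I, Ideal.mem_span_pair] at hp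
  obtain ⟨c, d, hcd⟩ := hp
  refine ⟨coeff 0 d, ?_⟩
  have hc1 : coeff (Finsupp.single 1 1 + Finsupp.single 0 1) (c * X 0 ^ 2) = 0 := by
    rw [pow_two, ← mul_assoc, coeff_mul_X, coeff_mul_X']
    simp
  have hc2 : coeff (Finsupp.single 1 2) (c * X 0 ^ 2) = 0 := by
    rw [pow_two, ← mul_assoc, coeff_mul_X']
    simp [Finsupp.support_single_ne_zero]
  have h : d * (X 1 * (X 1 + C a * X 0)) = (d * X 1) * X 1 + ((C a * d) * X 1) * X 0 := by ring
  have hd1 : coeff (Finsupp.single 1 1 + Finsupp.single 0 1) (d * (X 1 * (X 1 + C a * X 0)))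
      = a * coeff 0 d := by
    have e1 : coeff (Finsupp.single 1 1 + Finsupp.single 0 1) ((d * X 1) * X 1) = 0 := by
      rw [coeff_mul_X', coeff_mul_X']
      simp [Finsupp.support_single_ne_zero]
    have e2 : coeff (Finsupp.single 1 1 + Finsupp.single 0 1) (((C a * d) * X 1) * X 0)
        = a * coeff 0 d := by
      rw [coeff_mul_X, show (Finsupp.single 1 1 : Fin 2 →₀ ℕ) = 0 + Finsupp.single 1 1 from
        (zero_add _).symm, coeff_mul_X, coeff_C_mul]
    rw [h, coeff_add, e1, e2, zero_add]
  have hd2 : coeff (Finsupp.single 1 2) (d * (X 1 * (X 1 + C a * X 0))) = coeff 0 d := by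
    have e1 : coeff (Finsupp.single 1 2) ((d * X 1) * X 1) = coeff 0 d := by
      rw [show (Finsupp.single 1 2 : Fin 2 →₀ ℕ) = (0 + Finsupp.single 1 1) + Finsupp.single 1 1 by
          rw [zero_add, ← Finsupp.single_add], coeff_mul_X, coeff_mul_X]
    have e2 : coeff (Finsupp.single 1 2) (((C a * d) * X 1) * X 0) = 0 := by
      rw [coeff_mul_X']
      simp [Finsupp.support_single_ne_zero]
    rw [h, coeff_add, e1, e2, add_zero]
  rw [← hcd, coeff_add, coeff_add, hc1, hc2, hd1, hd2]
  ring

def P (a : ℤ) : Prop := ∃ z ∈ hirzebruchDeg2 a, ∀ w : hirzebruchRing a, z * z ≠ 2 * w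

lemma p_of_odd {a : ℤ} (ha : Odd a) : P a := by
  refine ⟨y a, y_mem_deg2 a, fun w hw => ?_⟩
  obtain ⟨w', rfl⟩ := mk_surj a w
  have : (X 1 * X 1 - 2 * w' : MvPolynomial (Fin 2) ℤ) ∈ I a := by
    rw [← Ideal.Quotient.eq_zero_iff_mem]
    show mk a _ = 0
    rw [map_sub, map_mul, map_mul, ← y]
    rw [show (mk a 2 : hirzebruchRing a) = 2 from map_ofNat (mk a) 2] at *
    rw [hw]; ring
  obtain ⟨d0, hd0⟩ := coeff_ideal a this
  have c1 : coeff (Finsupp.single 1 1 + Finsupp.single 0 1) (X 1 * X 1 : MvPolynomial (Fin 2) ℤ) = 0 := by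
    rw [show (X 1 * X 1 : MvPolynomial (Fin 2) ℤ) = (1 * X 1) * X 1 by ring,
      coeff_mul_X', coeff_mul_X']
    simp [Finsupp.support_single_ne_zero]
  have c2 : coeff (Finsupp.single 1 2) (X 1 * X 1 : MvPolynomial (Fin 2) ℤ) = 1 := by
    rw [show (X 1 * X 1 : MvPolynomial (Fin 2) ℤ) = (1 * X 1) * X 1 by ring,
      show (Finsupp.single 1 2 : Fin 2 →₀ ℕ) = (0 + Finsupp.single 1 1) + Finsupp.single 1 1 by
        rw [zero_add, ← Finsupp.single_add], coeff_mul_X, coeff_mul_X]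
    simp
  rw [coeff_sub, coeff_sub, c1, c2,
    show (2 * w' : MvPolynomial (Fin 2) ℤ) = C 2 * w' by rw [map_ofNat],
    coeff_C_mul, coeff_C_mul] at hd0
  have h2 : (2 : ℤ) ∣ (a + 1) * d0 := by
    obtain ⟨t, rfl⟩ := ha
    exact ⟨(t + 1) * d0, by ring⟩
  rw [← hd0] at h2
  omega
  

lemma not_p_of_even {a : ℤ} (ha : Even a) : ¬ P a := by
  rintro ⟨z, hz, hsq⟩
  obtain ⟨u, v, rfl⟩ := mem_deg2 a hz
  obtain ⟨m, hm⟩ := ha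
  apply hsq (((u * v : ℤ) : hirzebruchRing a) * (x a * y a)
      - ((v * v * m : ℤ) : hirzebruchRing a) * (x a * y a))
  have hA : (a : hirzebruchRing a) = ((m : ℤ) : hirzebruchRing a) + m := by
    rw [hm]; push_cast; ring
  have h1 := hx a
  have h2 := hrel a
  push_cast
  linear_combination ((u : hirzebruchRing a))^2 * h1 + ((v : hirzebruchRing a))^2 * h2
    - ((v:hirzebruchRing a))^2 * (x a) * (y a) * hA

noncomputable def f (b k : ℤ) : MvPolynomial (Fin 2) ℤ →+* hirzebruchRing b :=
  (aeval (R := ℤ) fun i : Fin 2 => if i = 0 then x b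
    else y b + (k : hirzebruchRing b) * x b).toRingHom

lemma f_X0 (b k : ℤ) : f b k (X 0) = x b := by simp [f]

lemma f_X1 (b k : ℤ) : f b k (X 1) = y b + (k : hirzebruchRing b) * x b := by simp [f]

lemma f_ker (a b k : ℤ) (hb : b = a + 2 * k) : ∀ p ∈ I a, f b k p = 0 := by
  intro p hp
  rw [I, Ideal.mem_span_pair] at hp
  obtain ⟨c, d, rfl⟩ := hp
  have hC : f b k (C a) = (a : hirzebruchRing b) := by
    simp [f, algebraMap_int_eq, eq_intCast]
  have h1 := hx b
  have h2 := hrel b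
  have hB : ((b : ℤ) : hirzebruchRing b) = (a : hirzebruchRing b) + 2 * k := by
    rw [hb]; push_cast; ring
  rw [map_add, map_mul, map_mul, map_mul, map_add, map_mul, map_pow, f_X0, f_X1, hC]
  linear_combination (f b k c) * h1 + (f b k d) * h2
    - (f b k d) * (x b * y b) * hB
    + (f b k d) * ((k:hirzebruchRing b) * ((a:hirzebruchRing b)+(k:hirzebruchRing b))) * h1

noncomputable def g (a b k : ℤ) (hb : b = a + 2 * k) :
    hirzebruchRing a →+* hirzebruchRing b :=
  Ideal.Quotient.lift (I a) (f b k) (f_ker a b k hb)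

lemma g_mk (a b k : ℤ) (hb : b = a + 2 * k) (p : MvPolynomial (Fin 2) ℤ) :
    g a b k hb (mk a p) = f b k p :=
  Ideal.Quotient.lift_mk (I a) _ _

lemma gg (a b k k' : ℤ) (hb : b = a + 2 * k) (ha : a = b + 2 * k') :
    (g b a k' ha).comp (g a b k hb) = RingHom.id _ := by
  obtain rfl : k' = -k := by omega
  apply Ideal.Quotient.ringHom_ext
  apply MvPolynomial.ringHom_ext
  · intro r
    show (g b a (-k) ha) ((g a b k hb) (mk a (C r))) = mk a (C r)
    rw [eq_intCast C r]
    simp [map_intCast]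
  · intro i
    fin_cases i
    · show (g b a (-k) ha) ((g a b k hb) (mk a (X 0))) = mk a (X 0)
      rw [g_mk, f_X0, show x b = mk b (X 0) from rfl, g_mk, f_X0]
      rfl
    · show (g b a (-k) ha) ((g a b k hb) (mk a (X 1))) = mk a (X 1)
      rw [g_mk, f_X1, map_add, map_mul,
        show y b = mk b (X 1) from rfl, show x b = mk b (X 0) from rfl,
        g_mk, g_mk, f_X0, f_X1, map_intCast]
      push_cast
      ring_nf
      rfl

noncomputable def iso (a b k : ℤ) (hb : b = a + 2 * k) :
    hirzebruchRing a ≃+* hirzebruchRing b :=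
  RingEquiv.ofRingHom (g a b k hb) (g b a (-k) (by omega))
    (gg b a (-k) k (by omega) hb) (gg a b k (-k) hb (by omega))

lemma iso_maps (a b k : ℤ) (hb : b = a + 2 * k) :
    ∀ z ∈ hirzebruchDeg2 a, (iso a b k hb) z ∈ hirzebruchDeg2 b := by
  intro z hz
  obtain ⟨u, v, rfl⟩ := mem_deg2 a hz
  have ex : (iso a b k hb) (x a) = x b := by
    show g a b k hb (mk a (X 0)) = x b
    rw [g_mk, f_X0]
  have ey : (iso a b k hb) (y a) = y b + (k : hirzebruchRing b) * x b := by
    show g a b k hb (mk a (X 1)) = _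
    rw [g_mk, f_X1]
  rw [map_add, map_mul, map_mul, map_intCast, map_intCast, ex, ey]
  have hxb := x_mem_deg2 b
  have hyb := y_mem_deg2 b
  rw [show ((u:hirzebruchRing b) * x b + (v:hirzebruchRing b) * (y b + (k:hirzebruchRing b) * x b))
      = (u + v * k) • x b + v • y b by push_cast [zsmul_eq_mul]; ring]
  exact Submodule.add_mem _ (Submodule.smul_mem _ _ hxb) (Submodule.smul_mem _ _ hyb)

end Hirz

/-- The graded rings `ℤ[x,y]/(x², y(y+ax))` and `ℤ[x,y]/(x², y(y+bx))` (with `x, y` in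
degree 2) are isomorphic as graded rings if and only if `a ≡ b (mod 2)`. -/
theorem hirzebruch_cohomology_iso_iff_mod_two (a b : ℤ) :
    (∃ e : hirzebruchRing a ≃+* hirzebruchRing b,
      (∀ z ∈ hirzebruchDeg2 a, e z ∈ hirzebruchDeg2 b) ∧
      (∀ w ∈ hirzebruchDeg2 b, e.symm w ∈ hirzebruchDeg2 a)) ↔ a ≡ b [ZMOD 2] := by
  constructor
  · rintro ⟨e, he, he'⟩
    have hPab : Hirz.P a ↔ Hirz.P b := by
      constructor
      · rintro ⟨z, hz, hne⟩
        refine ⟨e z, he z hz, fun w hw => hne (e.symm w) ?_⟩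
        have := congrArg e.symm hw
        rw [map_mul, RingEquiv.symm_apply_apply, map_mul, map_ofNat] at this
        exact this
      · rintro ⟨z, hz, hne⟩
        refine ⟨e.symm z, he' z hz, fun w hw => hne (e w) ?_⟩
        have := congrArg e hw
        rw [map_mul, RingEquiv.apply_symm_apply, map_mul, map_ofNat] at this
        exact this
    have hOdd : Odd a ↔ Odd b := by
      constructor
      · intro ha
        by_contra hbod
        exact Hirz.not_p_of_even (Int.not_odd_iff_even.1 hbod) (hPab.1 (Hirz.p_of_odd ha))
      · intro hbod
        by_contra ha
        exact Hirz.not_p_of_even (Int.not_odd_iff_even.1 ha) (hPab.2 (Hirz.p_of_odd hbod))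
      
    rw [Int.odd_iff, Int.odd_iff] at hOdd
    show a % 2 = b % 2
    omega
  · intro h
    obtain ⟨k, hk⟩ := h.dvd
    have hb : b = a + 2 * k := by omega
    refine ⟨Hirz.iso a b k hb, Hirz.iso_maps a b k hb, fun w hw => ?_⟩
    have h2 : a = b + 2 * (-k) := by omega
    have : (Hirz.iso a b k hb).symm w = Hirz.iso b a (-k) h2 w := rfl
    rw [this]
    exact Hirz.iso_maps b a (-k) h2 w hw
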